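/- Let A, B, R be square complex matrices of the same dimension with ‖AR‖ ≤ δ < 1/2 and A(B + R) = I. Then B is invertible and ‖A - B^{-1}‖ ≤ 2δ‖A‖. -/

import Mathlib

open scoped Matrix.Norms.L2Operator

/-- If `‖A R‖ ≤ δ < 1/2` and `A (B + R) = I`, then `B` is invertible and
`‖A - B⁻¹‖ ≤ 2 δ ‖A‖`. -/
theorem resolvent_perturbation {n : ℕ} (A B R : Matrix (Fin n) (Fin n) ℂ)
    (δ : ℝ) (hδ : δ < 1 / 2) (hAR : ‖A * R‖ ≤ δ)
    (hABR : A * (B + R) = 1) :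
    IsUnit B ∧ ‖A - B⁻¹‖ ≤ 2 * δ * ‖A‖ := by
  set t := A * R with ht_def
  have hδ0 : (0 : ℝ) ≤ δ := le_trans (norm_nonneg _) hAR
  have ht1 : ‖t‖ < 1 := lt_of_le_of_lt hAR (by linarith)
  have hAB : A * B = 1 - t := by
    rw [mul_add] at hABR
    rw [← hABR, ht_def]; noncomm_ring
  have hup : IsUnit (1 - t) := isUnit_one_sub_of_norm_lt_one ht1
  have hB : IsUnit B := by
    have h1 : IsUnit (A * B) := hAB ▸ hup
    rw [Matrix.isUnit_iff_isUnit_det] at h1 ⊢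
    rw [Matrix.det_mul] at h1
    exact isUnit_of_mul_isUnit_right h1
  refine ⟨hB, ?_⟩
  set u := Ring.inverse (1 - t) with hu_def
  have huinv : u * (1 - t) = 1 := Ring.inverse_mul_cancel _ hup
  have hBinv : B⁻¹ = u * A := by
    apply Matrix.inv_eq_left_inv
    rw [mul_assoc, hAB, huinv]
  have hkey : A - B⁻¹ = -(u * (t * A)) := by
    rw [hBinv]
    have h1u : 1 - u = -(u * t) := by
      rw [mul_sub, mul_one] at huinv
      calc 1 - u = (u - u * t) - u := by rw [huinv]
        _ = -(u * t) := by abel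
    calc A - u * A = (1 - u) * A := by noncomm_ring
      _ = -(u * (t * A)) := by rw [h1u]; noncomm_ring
  have hnorm1 : ‖(1 : Matrix (Fin n) (Fin n) ℂ)‖ ≤ 1 := by
    rw [Matrix.cstar_norm_def, map_one]
    exact ContinuousLinearMap.norm_id_le
  have hu2 : ‖u‖ ≤ 2 := by
    have h1 : ‖u‖ ≤ ‖(1 : Matrix (Fin n) (Fin n) ℂ)‖ - 1 + (1 - ‖t‖)⁻¹ := by
      rw [hu_def, ← geom_series_eq_inverse t ht1]
      exact tsum_geometric_le_of_norm_lt_one t ht1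
    have h2 : (1 - ‖t‖)⁻¹ ≤ 2 := by
      rw [← inv_inv (2 : ℝ)]
      refine inv_anti₀ (by norm_num) ?_
      have := le_trans hAR (le_of_lt hδ)
      linarith
    linarith
  rw [hkey, norm_neg]
  calc ‖u * (t * A)‖ ≤ ‖u‖ * ‖t * A‖ := norm_mul_le _ _
    _ ≤ ‖u‖ * (‖t‖ * ‖A‖) := by
        gcongr
        exact norm_mul_le _ _
    _ ≤ 2 * (δ * ‖A‖) := by
        have h1 : ‖t‖ * ‖A‖ ≤ δ * ‖A‖ := by gcongr
        nlinarith [norm_nonneg u, norm_nonneg t, norm_nonneg A, mul_nonneg (norm_nonneg t) (norm_nonneg A)]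
    _ = 2 * δ * ‖A‖ := by ring
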